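/- Let ζ ∈ ℂ be a primitive 9th root of unity, let a₂₈, a₃₇, a₄₆, a₅₅ be natural numbers and let α be an integer. If 1 + ζ⁸ = a₂₈/((1-ζ²)(1-ζ⁸)) + a₃₇/((1-ζ³)(1-ζ⁷)) + a₄₆/((1-ζ⁴)(1-ζ⁶)) + a₅₅/((1-ζ⁵)(1-ζ⁵)) + α·(1+ζ)/(1-ζ)², then a₂₈ + a₅₅ = 3α + 1, a₃₇ = 2α + 1, a₄₆ + 3a₂₈ = 8α + 4, and in particular α ≥ 0. -/

import Mathlib

open Polynomial

/-- Powers `1, ζ, ..., ζ⁵` of a primitive 9th root of unity are linearly independent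
over `ℚ`. -/
lemma aux_lin_indep_nine (ζ : ℂ) (hζ : IsPrimitiveRoot ζ 9) (c0 c1 c2 c3 c4 c5 : ℚ)
    (h : (c0 : ℂ) + c1 * ζ + c2 * ζ ^ 2 + c3 * ζ ^ 3 + c4 * ζ ^ 4 + c5 * ζ ^ 5 = 0) :
    c0 = 0 ∧ c1 = 0 ∧ c2 = 0 ∧ c3 = 0 ∧ c4 = 0 ∧ c5 = 0 := by
  set p : ℚ[X] := C c0 + C c1 * X + C c2 * X ^ 2 + C c3 * X ^ 3 + C c4 * X ^ 4 + C c5 * X ^ 5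
    with hp
  have hev : aeval ζ p = 0 := by
    simp only [hp, map_add, map_mul, map_pow, aeval_C, aeval_X]
    exact_mod_cast h
  have hmin : Polynomial.cyclotomic 9 ℚ = minpoly ℚ ζ :=
    Polynomial.cyclotomic_eq_minpoly_rat hζ (by norm_num)
  have hp0 : p = 0 := by
    by_contra hne
    have hdvd : minpoly ℚ ζ ∣ p := minpoly.dvd ℚ ζ hev
    have hdeg : (minpoly ℚ ζ).natDegree ≤ p.natDegree :=
      Polynomial.natDegree_le_of_dvd hdvd hne
    have h6 : (minpoly ℚ ζ).natDegree = 6 := by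
      rw [← hmin, Polynomial.natDegree_cyclotomic]
      decide
    have h5 : p.natDegree ≤ 5 := by
      rw [hp]; compute_degree
    omega
  rw [hp] at hp0
  refine ⟨?_, ?_, ?_, ?_, ?_, ?_⟩
  · simpa [coeff_add, coeff_C_mul, coeff_X_pow, coeff_C] using
      congrArg (fun q => Polynomial.coeff q 0) hp0
  · simpa [coeff_add, coeff_C_mul, coeff_X_pow, coeff_C] using
      congrArg (fun q => Polynomial.coeff q 1) hp0
  · simpa [coeff_add, coeff_C_mul, coeff_X_pow, coeff_C] using
      congrArg (fun q => Polynomial.coeff q 2) hp0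
  · simpa [coeff_add, coeff_C_mul, coeff_X_pow, coeff_C] using
      congrArg (fun q => Polynomial.coeff q 3) hp0
  · simpa [coeff_add, coeff_C_mul, coeff_X_pow, coeff_C] using
      congrArg (fun q => Polynomial.coeff q 4) hp0
  · simpa [coeff_add, coeff_C_mul, coeff_X_pow, coeff_C] using
      congrArg (fun q => Polynomial.coeff q 5) hp0

/-- Lemma 2.3 of the paper: if `ζ` is a primitive 9th root of unity and the holomorphic
Lefschetz formula
`1 + ζ⁸ = a₂₈/((1-ζ²)(1-ζ⁸)) + a₃₇/((1-ζ³)(1-ζ⁷)) + a₄₆/((1-ζ⁴)(1-ζ⁶)) + a₅₅/((1-ζ⁵)(1-ζ⁵))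
  + α(1+ζ)/(1-ζ)²`
holds, then `a₂₈ + a₅₅ = 3α + 1`, `a₃₇ = 2α + 1`, `a₄₆ + 3a₂₈ = 8α + 4` and `α ≥ 0`. -/
theorem lefschetz_relations_order_nine (ζ : ℂ) (hζ : IsPrimitiveRoot ζ 9)
    (a28 a37 a46 a55 : ℕ) (α : ℤ)
    (h : 1 + ζ ^ 8 =
      (a28 : ℂ) / ((1 - ζ ^ 2) * (1 - ζ ^ 8)) +
      (a37 : ℂ) / ((1 - ζ ^ 3) * (1 - ζ ^ 7)) +
      (a46 : ℂ) / ((1 - ζ ^ 4) * (1 - ζ ^ 6)) +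
      (a55 : ℂ) / ((1 - ζ ^ 5) * (1 - ζ ^ 5)) +
      (α : ℂ) * (1 + ζ) / (1 - ζ) ^ 2) :
    (a28 : ℤ) + (a55 : ℤ) = 3 * α + 1 ∧
    (a37 : ℤ) = 2 * α + 1 ∧
    (a46 : ℤ) + 3 * (a28 : ℤ) = 8 * α + 4 ∧
    0 ≤ α := by
  have hne : ∀ k, 0 < k → k < 9 → (1 : ℂ) - ζ ^ k ≠ 0 := fun k hk hk9 => by
    have := hζ.pow_ne_one_of_pos_of_lt hk.ne' hk9
    intro hcon
    exact this (by linear_combination -hcon)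
  have hne1 := hne 1 (by norm_num) (by norm_num)
  have hne2 := hne 2 (by norm_num) (by norm_num)
  have hne3 := hne 3 (by norm_num) (by norm_num)
  have hne4 := hne 4 (by norm_num) (by norm_num)
  have hne5 := hne 5 (by norm_num) (by norm_num)
  have hne6 := hne 6 (by norm_num) (by norm_num)
  have hne7 := hne 7 (by norm_num) (by norm_num)
  have hne8 := hne 8 (by norm_num) (by norm_num)
  have h9 : ζ ^ 9 = 1 := hζ.pow_eq_one
  have h6 : ζ ^ 6 + ζ ^ 3 + 1 = 0 := by
    have hfac : (ζ ^ 3 - 1) * (ζ ^ 6 + ζ ^ 3 + 1) = 0 := by linear_combination h9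
    rcases mul_eq_zero.mp hfac with hc | hc
    · exact absurd (by linear_combination -hc) hne3
    · exact hc
  -- rewrite each fraction as an explicit polynomial in ζ
  have e2 : (a28 : ℂ) / ((1 - ζ ^ 2) * (1 - ζ ^ 8)) =
      (a28 : ℂ) * ((1 - ζ ^ 2 - ζ ^ 3 - 2 * ζ ^ 5) / 3) := by
    rw [div_eq_iff (mul_ne_zero hne2 hne8)]
    linear_combination ((a28 : ℂ) * (2 + 2 * ζ ^ 2 - ζ ^ 3 - ζ ^ 4 - ζ ^ 5 - ζ ^ 6 - ζ ^ 7 + 2 * ζ ^ 9) / 3) * h6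
  have e3 : (a37 : ℂ) / ((1 - ζ ^ 3) * (1 - ζ ^ 7)) =
      (a37 : ℂ) * ((1 - ζ ^ 2 + ζ ^ 3 - ζ ^ 4) / 3) := by
    rw [div_eq_iff (mul_ne_zero hne3 hne7)]
    linear_combination ((a37 : ℂ) * (2 + ζ ^ 2 - 2 * ζ ^ 3 + ζ ^ 4 - 2 * ζ ^ 5 + ζ ^ 6 - ζ ^ 7 + ζ ^ 8) / 3) * h6
  have e4 : (a46 : ℂ) / ((1 - ζ ^ 4) * (1 - ζ ^ 6)) =
      (a46 : ℂ) * ((1 - ζ ^ 2 + ζ ^ 4 - ζ ^ 5) / 3) := by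
    rw [div_eq_iff (mul_ne_zero hne4 hne6)]
    linear_combination ((a46 : ℂ) * (2 + ζ ^ 2 - 2 * ζ ^ 3 - ζ ^ 8 + ζ ^ 9) / 3) * h6
  have e5 : (a55 : ℂ) / ((1 - ζ ^ 5) * (1 - ζ ^ 5)) =
      (a55 : ℂ) * ((-2 + 2 * ζ ^ 2 - ζ ^ 3 - 3 * ζ ^ 4 + ζ ^ 5) / 3) := by
    rw [div_eq_iff (mul_ne_zero hne5 hne5)]
    linear_combination ((a55 : ℂ) * (5 - 2 * ζ ^ 2 - 4 * ζ ^ 3 + 3 * ζ ^ 4 - 3 * ζ ^ 5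
      - ζ ^ 6 + ζ ^ 7 + 3 * ζ ^ 8 - ζ ^ 9) / 3) * h6
  have e1 : (α : ℂ) * (1 + ζ) / (1 - ζ) ^ 2 =
      (α : ℂ) * ((-4 + 4 * ζ ^ 2 + ζ ^ 3 + 3 * ζ ^ 4 + 5 * ζ ^ 5) / 3) := by
    have hne1' : (1 : ℂ) - ζ ≠ 0 := by simpa using hne1
    rw [div_eq_iff (pow_ne_zero 2 hne1')]
    linear_combination ((α : ℂ) * (7 - 5 * ζ) / 3) * h6
  rw [e2, e3, e4, e5, e1] at h
  have key : (((a28 : ℚ) + a37 + a46 - 2 * a55 - 4 * α - 3 : ℚ) : ℂ)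
      + ((0 : ℚ) : ℂ) * ζ
      + (((-(a28 : ℚ)) - a37 - a46 + 2 * a55 + 4 * α + 3 : ℚ) : ℂ) * ζ ^ 2
      + (((-(a28 : ℚ)) + a37 - a55 + α : ℚ) : ℂ) * ζ ^ 3
      + (((-(a37 : ℚ)) + a46 - 3 * a55 + 3 * α : ℚ) : ℂ) * ζ ^ 4
      + (((-2 * (a28 : ℚ)) - a46 + a55 + 5 * α + 3 : ℚ) : ℂ) * ζ ^ 5 = 0 := by
    push_cast
    linear_combination (-3 : ℂ) * h + 3 * ζ ^ 2 * h6
  obtain ⟨hc0, -, -, hc3, hc4, -⟩ := aux_lin_indep_nine ζ hζ _ _ _ _ _ _ key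
  have E0 : (a28 : ℤ) + a37 + a46 - 2 * a55 - 4 * α - 3 = 0 := by exact_mod_cast hc0
  have E3 : -(a28 : ℤ) + a37 - a55 + α = 0 := by exact_mod_cast hc3
  have E4 : -(a37 : ℤ) + a46 - 3 * a55 + 3 * α = 0 := by exact_mod_cast hc4
  have h37 : (0 : ℤ) ≤ (a37 : ℤ) := Int.natCast_nonneg a37
  refine ⟨by omega, by omega, by omega, by omega⟩
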